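/- Let h : ℝ^q → ℝ be differentiable with L_h-Lipschitz gradient, let B ∈ ℝ^{m×q}, and suppose y⁺, y^k satisfy ‖y⁺ − y^k‖ ≤ M̄‖By⁺ − By^k‖, Bᵀw⁺ = −∇h(y⁺), and w⁺ − w^k = β(Ax⁺ + By⁺) with ‖w⁺ − w^k‖ ≤ C‖By⁺ − By^k‖. If β > 2(L_h M̄² + 1 + C), then h(y^k) − h(y⁺) + ⟨w⁺, By^k − By⁺⟩ + (β/2)‖By⁺ − By^k‖² − (1/β)‖w⁺ − w^k‖² ≥ ‖By⁺ − By^k‖². -/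

import Mathlib

open scoped RealInnerProductSpace

lemma descent_lower {F : Type*} [NormedAddCommGroup F] [InnerProductSpace ℝ F]
    [CompleteSpace F]
    (h : F → ℝ) (g : F → F) (Lh : ℝ)
    (hgrad : ∀ y, HasGradientAt h (g y) y)
    (hlip : ∀ y₁ y₂, ‖g y₁ - g y₂‖ ≤ Lh * ‖y₁ - y₂‖)
    (x y : F) : h x + ⟪g x, y - x⟫ - Lh / 2 * ‖y - x‖ ^ 2 ≤ h y := by
  set d := y - x with hd
  have hgcont : Continuous g := by
    rcases le_or_gt Lh 0 with hL | hL
    · have : ∀ a b, g a = g b := by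
        intro a b
        have := hlip a b
        have hn : ‖g a - g b‖ ≤ 0 := this.trans (by nlinarith [norm_nonneg (a - b)])
        have := norm_nonneg (g a - g b)
        have : ‖g a - g b‖ = 0 := le_antisymm hn this
        simpa [sub_eq_zero] using norm_eq_zero.mp this
      have : g = fun _ => g x := funext fun a => this a x
      rw [this]; exact continuous_const
    · exact (LipschitzWith.of_dist_le_mul (K := ⟨Lh, hL.le⟩) (fun a b => by
        rw [dist_eq_norm, dist_eq_norm]; exact hlip a b)).continuous
  have key : ∀ t : ℝ, HasDerivAt (fun t : ℝ => h (x + t • d)) ⟪g (x + t • d), d⟫ t := by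
    intro t
    have h2 : HasDerivAt (fun t : ℝ => x + t • d) d t := by
      simpa using ((hasDerivAt_id t).smul_const d).const_add x
    have h1 := (hgrad (x + t • d)).hasFDerivAt
    have := h1.comp_hasDerivAt t h2
    simpa [InnerProductSpace.toDual_apply_apply, Function.comp_def] using this
  have hcont : Continuous fun t : ℝ => ⟪g (x + t • d), d⟫ := by
    exact (Continuous.inner (hgcont.comp (by continuity)) continuous_const)
  have hint : h (x + (1:ℝ) • d) - h (x + (0:ℝ) • d)
      = ∫ t in (0:ℝ)..1, ⟪g (x + t • d), d⟫ := by
    exact intervalIntegral.integral_eq_sub_of_hasDerivAt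
      (fun t _ => key t) (hcont.intervalIntegrable 0 1) |>.symm
  have heq : h y - h x = ∫ t in (0:ℝ)..1, ⟪g (x + t • d), d⟫ := by
    simpa [hd] using hint
  have hbound : ∫ t in (0:ℝ)..1, ⟪g (x + t • d), d⟫
      ≥ ∫ t in (0:ℝ)..1, (⟪g x, d⟫ - Lh * t * ‖d‖ ^ 2) := by
    apply intervalIntegral.integral_mono_on (by norm_num)
    · exact ((continuous_const.sub (by continuity)).intervalIntegrable 0 1)
    · exact hcont.intervalIntegrable 0 1
    · intro t ht
      have hineq : ‖g (x + t • d) - g x‖ ≤ Lh * (t * ‖d‖) := by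
        have := hlip (x + t • d) x
        simpa [norm_smul, abs_of_nonneg ht.1, mul_assoc] using this
      have := abs_real_inner_le_norm (g (x + t • d) - g x) d
      have h5 : ⟪g (x + t • d) - g x, d⟫ ≥ -(Lh * t * ‖d‖ ^ 2) := by
        nlinarith [norm_nonneg d, neg_abs_le ⟪g (x + t • d) - g x, d⟫]
      have h6 : ⟪g (x + t • d), d⟫ = ⟪g x, d⟫ + ⟪g (x + t • d) - g x, d⟫ := by
        rw [← inner_add_left]; congr 1; abel
      linarith
  have hval : ∫ t in (0:ℝ)..1, (⟪g x, d⟫ - Lh * t * ‖d‖ ^ 2)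
      = ⟪g x, d⟫ - Lh / 2 * ‖d‖ ^ 2 := by
    rw [intervalIntegral.integral_sub (intervalIntegrable_const)
      (by apply Continuous.intervalIntegrable; continuity)]
    have hf : (fun t : ℝ => Lh * t * ‖d‖ ^ 2) = fun t : ℝ => (Lh * ‖d‖ ^ 2) * t := by
      funext t; ring
    rw [hf, intervalIntegral.integral_const_mul, integral_id]
    simp
    ring
  linarith [heq, hbound, hval.symm.le, hval.le]

/-- Descent of the augmented Lagrangian during the y and w updates of ADMM:
under Lipschitz gradient of h, the sub-minimization path bound, first-order
optimality Bᵀw⁺ = −∇h(y⁺), the w-update formula, and β > 2(L_h M̄² + 1 + C),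
h(y^k) − h(y⁺) + ⟨w⁺, By^k − By⁺⟩ + (β/2)‖By⁺ − By^k‖² − (1/β)‖w⁺ − w^k‖²
  ≥ ‖By⁺ − By^k‖². -/
theorem stmt11 {E F G : Type*}
    [NormedAddCommGroup E] [InnerProductSpace ℝ E]
    [NormedAddCommGroup F] [InnerProductSpace ℝ F] [CompleteSpace F]
    [NormedAddCommGroup G] [InnerProductSpace ℝ G] [CompleteSpace G]
    (h : F → ℝ) (g : F → F) (Lh Mbar C β : ℝ)
    (hLh : 0 ≤ Lh) (hC : 0 ≤ C)
    (hgrad : ∀ y, HasGradientAt h (g y) y)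
    (hlip : ∀ y₁ y₂, ‖g y₁ - g y₂‖ ≤ Lh * ‖y₁ - y₂‖)
    (A : E →L[ℝ] G) (B : F →L[ℝ] G)
    (xp : E) (yp yk : F) (wp wk : G)
    (h1 : ‖yp - yk‖ ≤ Mbar * ‖B yp - B yk‖)
    (h2 : B.adjoint wp = -(g yp))
    (h3 : wp - wk = β • (A xp + B yp))
    (h4 : ‖wp - wk‖ ≤ C * ‖B yp - B yk‖)
    (hβ : 2 * (Lh * Mbar ^ 2 + 1 + C) < β) :
    h yk - h yp + ⟪wp, B yk - B yp⟫ + β / 2 * ‖B yp - B yk‖ ^ 2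
      - (1 / β) * ‖wp - wk‖ ^ 2 ≥ ‖B yp - B yk‖ ^ 2 := by
  have hm : 0 ≤ Lh * Mbar ^ 2 := mul_nonneg hLh (sq_nonneg Mbar)
  have hβ0 : 0 < β := by nlinarith
  set s := ‖B yp - B yk‖ with hs
  have hs0 : 0 ≤ s := norm_nonneg _
  have hd := descent_lower h g Lh hgrad hlip yp yk
  have hinner : ⟪g yp, yk - yp⟫ = -⟪wp, B yk - B yp⟫ := by
    have e1 : ⟪B.adjoint wp, yk - yp⟫ = ⟪wp, B (yk - yp)⟫ :=
      ContinuousLinearMap.adjoint_inner_left B (yk - yp) wp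
    rw [h2, inner_neg_left] at e1
    rw [map_sub] at e1
    linarith [e1]
  have hyy : ‖yk - yp‖ ^ 2 ≤ Mbar ^ 2 * s ^ 2 := by
    have h1' : ‖yk - yp‖ ≤ Mbar * s := by rwa [norm_sub_rev]
    nlinarith [norm_nonneg (yk - yp)]
  have hww : ‖wp - wk‖ ^ 2 ≤ C ^ 2 * s ^ 2 := by
    nlinarith [norm_nonneg (wp - wk)]
  have hCb : C ^ 2 / β ≤ C / 2 := by
    rw [div_le_div_iff₀ hβ0 (by norm_num : (0:ℝ) < 2)]
    nlinarith
  have hcoef : 1 ≤ β / 2 - Lh * Mbar ^ 2 / 2 - C ^ 2 / β := by linarith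
  have hb1 : Lh / 2 * ‖yk - yp‖ ^ 2 ≤ Lh / 2 * (Mbar ^ 2 * s ^ 2) :=
    mul_le_mul_of_nonneg_left hyy (by positivity)
  have hb2 : (1 / β) * ‖wp - wk‖ ^ 2 ≤ (1 / β) * (C ^ 2 * s ^ 2) :=
    mul_le_mul_of_nonneg_left hww (by positivity)
  have hb3 : 1 * s ^ 2 ≤ (β / 2 - Lh * Mbar ^ 2 / 2 - C ^ 2 / β) * s ^ 2 :=
    mul_le_mul_of_nonneg_right hcoef (sq_nonneg s)
  have hfield : (C ^ 2 / β) * s ^ 2 = (1 / β) * (C ^ 2 * s ^ 2) := by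
    field_simp
  nlinarith [hd, hinner, hb1, hb2, hb3, hfield]
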